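/- Let u ∈ L¹([0,T];ℝ₊) and let l:ℝ→(0,+∞) be a continuous function belonging to the class LS. Then for all real numbers a ≤ 0 ≤ b, the backward integral equations L_t = a − ∫_t^T u(s) l(L_s) ds and U_t = b + ∫_t^T u(s) l(U_s) ds each have a unique bounded continuous solution L, U : [0,T] → ℝ, and these solutions satisfy L_0 ≤ L_t ≤ a ≤ 0 ≤ b ≤ U_t ≤ U_0 for every t ∈ [0,T]. (Lemma 3.1, sufficiency direction.) -/

import Mathlib

open MeasureTheory Set Filter Topology
open scoped ENNReal NNReal

noncomputable section

/-- The time interval `[0,T]`, where `0 < T ≤ +∞` is an extended real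
(understood as `[0,+∞)` when `T = +∞`). -/
def timeSet (T : EReal) : Set ℝ := {s : ℝ | 0 ≤ s ∧ (s : EReal) ≤ T}


lemma key_subst (U : ℝ → ℝ) (hUi : Integrable U) (hU0 : ∀ s, 0 ≤ U s)
    (φ : ℝ → ℝ) (hφ : Continuous φ) (p q : ℝ) (hpq : p ≤ q) :
    ∫ s in Ioc p q, φ (∫ x in Ioc p s, U x) * U s
      = ∫ y in Ioc 0 (∫ x in Ioc p q, U x), φ y := by
  set W : ℝ → ℝ := fun s => ∫ x in Ioc p s, U x with hW
  have hU0' : (0:ℝ→ℝ) ≤ᵐ[volume] U := Filter.Eventually.of_forall hU0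
  have hWnn : ∀ s, 0 ≤ W s := fun s => setIntegral_nonneg measurableSet_Ioc fun x _ => hU0 x
  have hWmono : Monotone W := fun s₁ s₂ h =>
    setIntegral_mono_set hUi.integrableOn (ae_restrict_of_ae hU0')
      (HasSubset.Subset.eventuallyLE (Ioc_subset_Ioc_right h))
  have hWeq : ∀ s, W s = ∫ x in p..(max p s), U x := by
    intro s
    rcases le_total p s with h | h
    · rw [max_eq_right h, intervalIntegral.integral_of_le h]
    · rw [max_eq_left h, intervalIntegral.integral_same, hW]
      simp [Ioc_eq_empty (not_lt.2 h)]
  have hWcont : Continuous W := by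
    have h1 : Continuous fun s : ℝ => ∫ x in p..s, U x :=
      intervalIntegral.continuous_primitive (fun a b => hUi.intervalIntegrable) p
    have h2 : Continuous fun s : ℝ => max p s := continuous_const.max continuous_id
    simpa [funext hWeq, Function.comp_def] using h1.comp h2
  have hWp : W p = 0 := by rw [hW]; simp
  -- the pushforward measure
  set μ : Measure ℝ :=
      (volume.restrict (Ioc p q)).withDensity fun s => ENNReal.ofReal (U s) with hμdef
  have hof : ∀ α β : ℝ, p ≤ α → ∫⁻ s in Ioc α β, ENNReal.ofReal (U s)
      = ENNReal.ofReal (W β - W α) := by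
    intro α β hα
    rcases le_total α β with h | h
    · have hsplit : Ioc p β = Ioc p α ∪ Ioc α β := (Ioc_union_Ioc_eq_Ioc hα h).symm
      have hdisj : Disjoint (Ioc p α) (Ioc α β) := by
        refine disjoint_left.2 fun x hx1 hx2 => ?_
        exact absurd hx2.1 (not_lt.2 hx1.2)
      have hint : W β = W α + ∫ x in Ioc α β, U x := by
        rw [hW]; simp only
        rw [hsplit, setIntegral_union hdisj measurableSet_Ioc hUi.integrableOn hUi.integrableOn]
      rw [hint, add_sub_cancel_left,
        ← ofReal_integral_eq_lintegral_ofReal hUi.integrableOn (ae_restrict_of_ae hU0')]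
    · have h1 : Ioc α β = (∅ : Set ℝ) := Ioc_eq_empty (not_lt.2 h)
      have h2 : W β ≤ W α := hWmono h
      rw [h1]
      simp [ENNReal.ofReal_eq_zero.2 (sub_nonpos.2 h2)]
  have hμset : ∀ A : Set ℝ, MeasurableSet A →
      μ A = ∫⁻ s in A ∩ Ioc p q, ENNReal.ofReal (U s) := by
    intro A hA
    rw [hμdef, withDensity_apply _ hA, Measure.restrict_restrict hA]
  have hμfin : IsFiniteMeasure μ := by
    constructor
    rw [hμset univ MeasurableSet.univ, univ_inter, hof p q le_rfl]
    exact ENNReal.ofReal_lt_top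
  have hWmeas : Measurable W := hWcont.measurable
  have hmapfin : IsFiniteMeasure (μ.map W) := by
    constructor
    rw [Measure.map_apply hWmeas MeasurableSet.univ]
    exact measure_lt_top μ _
  have hmap : μ.map W = volume.restrict (Ioc 0 (W q)) := by
    refine Measure.ext_of_Iic _ _ fun x => ?_
    rw [Measure.map_apply hWmeas measurableSet_Iic,
      Measure.restrict_apply measurableSet_Iic,
      hμset _ (hWmeas measurableSet_Iic)]
    rcases lt_or_ge x 0 with hx | hx
    · have h1 : W ⁻¹' Iic x ∩ Ioc p q = ∅ := by
        refine eq_empty_iff_forall_notMem.2 fun s hs => ?_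
        exact absurd (le_trans (hWnn s) hs.1) (not_le.2 hx)
      have h2 : Iic x ∩ Ioc 0 (W q) = ∅ := by
        refine eq_empty_iff_forall_notMem.2 fun y hy => ?_
        exact absurd (lt_of_lt_of_le hy.2.1 hy.1) (not_lt.2 hx.le)
      rw [h1, h2]; simp
    rcases le_or_gt (W q) x with hxq | hxq
    · have h1 : W ⁻¹' Iic x ∩ Ioc p q = Ioc p q :=
        inter_eq_right.2 fun s hs => le_trans (hWmono hs.2) hxq
      have h2 : Iic x ∩ Ioc 0 (W q) = Ioc 0 (W q) :=
        inter_eq_right.2 fun y hy => le_trans hy.2 hxq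
      rw [h1, h2, hof p q le_rfl, hWp, sub_zero, Real.volume_Ioc, sub_zero]
    · -- 0 ≤ x < W q
      set A : Set ℝ := {y ∈ Icc p q | W y ≤ x} with hA
      have hpA : p ∈ A := ⟨⟨le_rfl, hpq⟩, by rw [hWp]; exact hx⟩
      have hAne : A.Nonempty := ⟨p, hpA⟩
      have hAbdd : BddAbove A := ⟨q, fun y hy => hy.1.2⟩
      have hAcl : IsClosed A := by
        have : A = Icc p q ∩ W ⁻¹' Iic x := by
          ext y; simp [hA, and_comm]
        rw [this]
        exact isClosed_Icc.inter (isClosed_Iic.preimage hWcont)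
      set β : ℝ := sSup A with hβ
      have hβA : β ∈ A := hAcl.csSup_mem hAne hAbdd
      have hpβ : p ≤ β := le_csSup hAbdd hpA
      have hβq : β ≤ q := hβA.1.2
      have hβlt : β < q := by
        rcases eq_or_lt_of_le hβq with h | h
        · exact absurd (h ▸ hβA.2) (not_le.2 hxq)
        · exact h
      have hWβ : W β = x := by
        refine le_antisymm hβA.2 ?_
        by_contra hcon
        push_neg at hcon
        have hev : ∀ᶠ y in 𝓝[>] β, W y < x :=
          eventually_nhdsWithin_of_eventually_nhds
            (hWcont.continuousAt.eventually_lt continuousAt_const hcon)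
        have hev2 : ∀ᶠ y in 𝓝[>] β, y ∈ Ioo β q := Ioo_mem_nhdsGT_of_mem ⟨le_rfl, hβlt⟩
        obtain ⟨y, hy1, hy2⟩ := (hev.and hev2).exists
        have : y ∈ A := ⟨⟨hpβ.trans hy2.1.le, hy2.2.le⟩, hy1.le⟩
        exact absurd (le_csSup hAbdd this) (not_le.2 hy2.1)
      have h1 : W ⁻¹' Iic x ∩ Ioc p q = Ioc p β := by
        ext s
        constructor
        · rintro ⟨hs1, hs2⟩
          exact ⟨hs2.1, le_csSup hAbdd ⟨⟨hs2.1.le, hs2.2⟩, hs1⟩⟩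
        · rintro ⟨hs1, hs2⟩
          exact ⟨le_trans (hWmono hs2) hWβ.le, hs1, hs2.trans hβq⟩
      have h2 : Iic x ∩ Ioc 0 (W q) = Ioc 0 x := by
        rw [inter_comm, Ioc_inter_Iic, min_eq_right hxq.le]
      rw [h1, h2, hof p β le_rfl, hWβ, hWp, sub_zero, Real.volume_Ioc, sub_zero]
  -- final computation
  have hdens : AEMeasurable (fun s => Real.toNNReal (U s)) (volume.restrict (Ioc p q)) :=
    measurable_real_toNNReal.comp_aemeasurable (hUi.aemeasurable.restrict)
  calc ∫ s in Ioc p q, φ (W s) * U s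
      = ∫ s, Real.toNNReal (U s) • φ (W s) ∂(volume.restrict (Ioc p q)) := by
        refine integral_congr_ae (Filter.Eventually.of_forall fun s => ?_)
        show φ (W s) * U s = (U s).toNNReal • φ (W s)
        rw [NNReal.smul_def, Real.coe_toNNReal _ (hU0 s), mul_comm]
        rfl
    _ = ∫ s, φ (W s) ∂μ := by
        rw [hμdef, ← integral_withDensity_eq_integral_smul₀ hdens]
        rfl
    _ = ∫ y, φ y ∂(μ.map W) := (integral_map hWmeas.aemeasurable hφ.aestronglyMeasurable).symm
    _ = ∫ y in Ioc 0 (W q), φ y := by rw [hmap]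




lemma primitive_unbounded (g : ℝ → ℝ) (hg : Continuous g) (hg0 : ∀ x, 0 < g x)
    (h : ∫⁻ x in Ici (0:ℝ), ENNReal.ofReal (g x) = ⊤) (c : ℝ) (B : ℝ) :
    ∃ n : ℕ, B ≤ ∫ z in c..(n:ℝ), g z := by
  by_contra hcon
  push_neg at hcon
  set ν : Measure ℝ := volume.withDensity fun x => ENNReal.ofReal (g x) with hν
  have hgm : Measurable fun x => ENNReal.ofReal (g x) :=
    ENNReal.measurable_ofReal.comp hg.measurable
  have hνIci : ν (Ici 0) = ⊤ := by rw [hν, withDensity_apply _ measurableSet_Ici]; exact h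
  have hνIoi : ν (Ioi 0) = ⊤ := by
    have := measure_union_le (μ := ν) ({0} : Set ℝ) (Ioi 0)
    have h0 : ({0} : Set ℝ) ∪ Ioi 0 = Ici 0 := by
      ext x; simp [le_iff_lt_or_eq, or_comm, eq_comm]
    rw [h0, hνIci] at this
    have hν0 : ν ({0} : Set ℝ) = 0 := by
      rw [hν, withDensity_apply _ (measurableSet_singleton 0)]
      refine le_antisymm ?_ zero_le
      calc ∫⁻ x in ({0}:Set ℝ), ENNReal.ofReal (g x)
          ≤ ∫⁻ _ in ({0}:Set ℝ), ⊤ := lintegral_mono fun x => le_top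
        _ = 0 := by simp
    rcases eq_top_or_lt_top (ν (Ioi 0)) with hh | hh
    · exact hh
    · exact absurd (le_trans this (by rw [hν0, zero_add])) (by simp [lt_top_iff_ne_top] at hh ⊢; exact hh)
  have hmono : Monotone fun n : ℕ => Ioc (0:ℝ) (n:ℝ) := fun m n hmn =>
    Ioc_subset_Ioc_right (Nat.cast_le.2 hmn)
  have hun : ⋃ n : ℕ, Ioc (0:ℝ) (n:ℝ) = Ioi 0 := by
    ext x
    simp only [mem_iUnion, mem_Ioc, mem_Ioi]
    constructor
    · rintro ⟨n, hn, _⟩; exact hn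
    · intro hx
      obtain ⟨n, hn⟩ := exists_nat_ge x
      exact ⟨n, hx, hn⟩
  have htend : Tendsto (fun n : ℕ => ν (Ioc (0:ℝ) (n:ℝ))) atTop (𝓝 (ν (Ioi 0))) := by
    rw [← hun]; exact tendsto_measure_iUnion_atTop hmono
  rw [hνIoi] at htend
  have hbound : ∀ n : ℕ, ν (Ioc (0:ℝ) (n:ℝ)) ≤ ENNReal.ofReal (B - ∫ z in c..(0:ℝ), g z) := by
    intro n
    have hgi : IntegrableOn g (Ioc (0:ℝ) (n:ℝ)) := hg.integrableOn_Ioc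
    rw [hν, withDensity_apply _ measurableSet_Ioc,
      ← ofReal_integral_eq_lintegral_ofReal hgi
        (ae_restrict_of_ae (Filter.Eventually.of_forall fun x => (hg0 x).le))]
    apply ENNReal.ofReal_le_ofReal
    have hsub : (∫ z in c..(n:ℝ), g z) - ∫ z in c..(0:ℝ), g z = ∫ z in (0:ℝ)..(n:ℝ), g z :=
      intervalIntegral.integral_interval_sub_left (hg.intervalIntegrable c n)
        (hg.intervalIntegrable c 0)
    have : ∫ x in Ioc (0:ℝ) (n:ℝ), g x = ∫ z in (0:ℝ)..(n:ℝ), g z :=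
      (intervalIntegral.integral_of_le (Nat.cast_nonneg n)).symm
    rw [this, ← hsub]
    exact sub_le_sub_right (hcon n).le _
  have hlt : ENNReal.ofReal (B - ∫ z in c..(0:ℝ), g z) < ⊤ := ENNReal.ofReal_lt_top
  obtain ⟨n, hn⟩ := (htend.eventually (eventually_gt_nhds hlt)).exists
  exact absurd (hbound n) (not_le.2 hn)

lemma primitive_tendsto_atTop (g : ℝ → ℝ) (hg : Continuous g) (hg0 : ∀ x, 0 < g x)
    (h : ∫⁻ x in Ici (0:ℝ), ENNReal.ofReal (g x) = ⊤) (c : ℝ) :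
    Tendsto (fun x => ∫ z in c..x, g z) atTop atTop := by
  have hmono : Monotone fun x => ∫ z in c..x, g z := by
    intro x y hxy
    have h1 : (∫ z in c..y, g z) - ∫ z in c..x, g z = ∫ z in x..y, g z :=
      intervalIntegral.integral_interval_sub_left (hg.intervalIntegrable c y)
        (hg.intervalIntegrable c x)
    have hnn : 0 ≤ ∫ z in x..y, g z :=
      intervalIntegral.integral_nonneg hxy fun z _ => (hg0 z).le
    linarith
  refine tendsto_atTop_atTop_of_monotone hmono fun B => ?_
  obtain ⟨n, hn⟩ := primitive_unbounded g hg hg0 h c B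
  exact ⟨n, hn⟩

lemma lintegral_reflect (f : ℝ → ℝ≥0∞) (hf : Measurable f) :
    ∫⁻ x in Iic (0:ℝ), f (-x) = ∫⁻ x in Ici (0:ℝ), f x := by
  have hmp : MeasurePreserving (fun x : ℝ => -x) volume volume :=
    Measure.measurePreserving_neg volume
  have hemb : MeasurableEmbedding (fun x : ℝ => -x) :=
    (Homeomorph.neg ℝ).measurableEmbedding
  have := hmp.setLIntegral_comp_preimage_emb hemb f (Ici 0)
  have hpre : (fun x : ℝ => -x) ⁻¹' Ici 0 = Iic 0 := by
    ext x; simp [neg_nonneg]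
  rw [hpre] at this
  exact this

lemma lintegral_reflect' (f : ℝ → ℝ≥0∞) (hf : Measurable f) :
    ∫⁻ x in Ici (0:ℝ), f (-x) = ∫⁻ x in Iic (0:ℝ), f x := by
  have hmp : MeasurePreserving (fun x : ℝ => -x) volume volume :=
    Measure.measurePreserving_neg volume
  have hemb : MeasurableEmbedding (fun x : ℝ => -x) :=
    (Homeomorph.neg ℝ).measurableEmbedding
  have := hmp.setLIntegral_comp_preimage_emb hemb f (Iic 0)
  have hpre : (fun x : ℝ => -x) ⁻¹' Iic 0 = Ici 0 := by
    ext x; simp [neg_nonpos]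
  rw [hpre] at this
  exact this

lemma primitive_tendsto_atBot (g : ℝ → ℝ) (hg : Continuous g) (hg0 : ∀ x, 0 < g x)
    (h : ∫⁻ x in Iic (0:ℝ), ENNReal.ofReal (g x) = ⊤) (c : ℝ) :
    Tendsto (fun x => ∫ z in c..x, g z) atBot atBot := by
  have hmono : Monotone fun x => ∫ z in c..x, g z := by
    intro x y hxy
    have h1 : (∫ z in c..y, g z) - ∫ z in c..x, g z = ∫ z in x..y, g z :=
      intervalIntegral.integral_interval_sub_left (hg.intervalIntegrable c y)
        (hg.intervalIntegrable c x)
    have hnn : 0 ≤ ∫ z in x..y, g z :=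
      intervalIntegral.integral_nonneg hxy fun z _ => (hg0 z).le
    linarith
  refine tendsto_atBot_atBot_of_monotone hmono fun B => ?_
  -- use reflection
  set g' : ℝ → ℝ := fun x => g (-x) with hg'
  have hg'c : Continuous g' := hg.comp continuous_neg
  have hg'0 : ∀ x, 0 < g' x := fun x => hg0 (-x)
  have hg'int : ∫⁻ x in Ici (0:ℝ), ENNReal.ofReal (g' x) = ⊤ := by
    rw [lintegral_reflect' (fun x => ENNReal.ofReal (g x))
      (ENNReal.measurable_ofReal.comp hg.measurable)]
    exact h
  obtain ⟨n, hn⟩ := primitive_unbounded g' hg'c hg'0 hg'int (-c) (-B)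
  refine ⟨-(n:ℝ), ?_⟩
  have h1 : ∫ z in (-c)..(n:ℝ), g' z = ∫ z in (-(n:ℝ))..c, g z := by
    rw [hg']
    simpa using intervalIntegral.integral_comp_neg (a := -c) (b := (n:ℝ)) fun z => g z
  have h2 : ∫ z in c..(-(n:ℝ)), g z = -∫ z in (-(n:ℝ))..c, g z :=
    intervalIntegral.integral_symm _ _
  rw [h2, ← h1]
  linarith


lemma master (S : Set ℝ) (hS : MeasurableSet S) (h0S : (0:ℝ) ∈ S) (hSpos : ∀ t ∈ S, 0 ≤ t)
    (q : ℕ → ℝ) (hqmono : Monotone q) (hqS : ∀ n, q n ∈ S)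
    (hqle : ∀ t ∈ S, ∀ᶠ n in atTop, t ≤ q n)
    (hUnion : ∀ t ∈ S, Ioi t ∩ S = ⋃ n, Ioc t (q n))
    (hInter : ⋂ n, (Ioi (q n) ∩ S) = (∅ : Set ℝ))
    (u : ℝ → ℝ) (hu0 : ∀ s ∈ S, 0 ≤ u s) (hui : IntegrableOn u S)
    (l : ℝ → ℝ) (hlc : Continuous l) (hlp : ∀ x, 0 < l x)
    (hneg : ∫⁻ x in Iic (0:ℝ), ENNReal.ofReal (1 / l x) = ⊤)
    (hpos : ∫⁻ x in Ici (0:ℝ), ENNReal.ofReal (1 / l x) = ⊤)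
    (b : ℝ) :
    ∃ U : ℝ → ℝ, Continuous U ∧
      (∀ t ∈ S, U t = b + ∫ s in Ioi t ∩ S, u s * l (U s)) ∧
      (∀ t ∈ S, b ≤ U t ∧ U t ≤ U 0) ∧
      (∀ U' : ℝ → ℝ, ContinuousOn U' S → (∃ M, ∀ t ∈ S, |U' t| ≤ M) →
        (∀ t ∈ S, U' t = b + ∫ s in Ioi t ∩ S, u s * l (U' s)) →
        ∀ t ∈ S, U' t = U t) := by
  -- the function G and its inverse
  set g : ℝ → ℝ := fun x => 1 / l x with hgdef
  have hgc : Continuous g := continuous_const.div hlc fun x => (hlp x).ne'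
  have hgp : ∀ x, 0 < g x := fun x => one_div_pos.2 (hlp x)
  set G : ℝ → ℝ := fun x => ∫ z in b..x, g z with hGdef
  have hGint : ∀ x y : ℝ, IntervalIntegrable g volume x y := fun x y => hgc.intervalIntegrable x y
  have hGsub : ∀ x y : ℝ, G y - G x = ∫ z in x..y, g z := fun x y =>
    intervalIntegral.integral_interval_sub_left (hGint b y) (hGint b x)
  have hGderiv : ∀ x, HasDerivAt G (g x) x := fun x =>
    intervalIntegral.integral_hasDerivAt_right (hGint b x)
      hgc.stronglyMeasurable.stronglyMeasurableAtFilter hgc.continuousAt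
  have hGcont : Continuous G := intervalIntegral.continuous_primitive (fun a b => hGint a b) b
  have hGmono : StrictMono G := strictMono_of_deriv_pos fun x => by
    rw [(hGderiv x).deriv]; exact hgp x
  have hGtop : Tendsto G atTop atTop := primitive_tendsto_atTop g hgc hgp hpos b
  have hGbot : Tendsto G atBot atBot := primitive_tendsto_atBot g hgc hgp hneg b
  have hGsurj : Function.Surjective G := hGcont.surjective hGtop hGbot
  set E : ℝ ≃o ℝ := StrictMono.orderIsoOfSurjective G hGmono hGsurj with hE
  set Ginv : ℝ → ℝ := fun y => E.symm y with hGinvdef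
  have hGinv : ∀ y, G (Ginv y) = y := fun y => E.apply_symm_apply y
  have hGinvG : ∀ x, Ginv (G x) = x := fun x => E.symm_apply_apply x
  have hGinvc : Continuous Ginv := E.symm.continuous
  have hGinvmono : Monotone Ginv := E.symm.monotone
  have hGb : G b = 0 := intervalIntegral.integral_same
  have hGinv0 : Ginv 0 = b := by rw [← hGb, hGinvG]
  have hGinvderiv : ∀ y, HasDerivAt Ginv (l (Ginv y)) y := by
    intro y
    have h := HasDerivAt.of_local_left_inverse hGinvc.continuousAt (hGderiv (Ginv y))
      (ne_of_gt (hgp _)) (Filter.Eventually.of_forall hGinv)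
    have : (g (Ginv y))⁻¹ = l (Ginv y) := by
      rw [hgdef]; simp
    rwa [this] at h
  have hFTCinv : ∀ c d : ℝ, ∫ z in c..d, l (Ginv z) = Ginv d - Ginv c := fun c d =>
    intervalIntegral.integral_eq_sub_of_hasDerivAt (fun x _ => hGinvderiv x)
      ((hlc.comp hGinvc).intervalIntegrable c d)
  -- the tail integral v
  set u0 : ℝ → ℝ := S.indicator u with hu0def
  have hu0i : Integrable u0 := (integrable_indicator_iff hS).2 hui
  have hu0nn : ∀ s, 0 ≤ u0 s := by
    intro s
    by_cases h : s ∈ S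
    · rw [hu0def, indicator_of_mem h]; exact hu0 s h
    · rw [hu0def, indicator_of_notMem h]
  set v0 : ℝ := ∫ s in Ioi 0 ∩ S, u s with hv0def
  set P : ℝ → ℝ := fun t => ∫ x in (0:ℝ)..t, u0 x with hPdef
  have hPc : Continuous P :=
    intervalIntegral.continuous_primitive (fun a b => hu0i.intervalIntegrable) 0
  set v : ℝ → ℝ := fun t => v0 - P t with hvdef
  have hvc : Continuous v := continuous_const.sub hPc
  have hvmono : Antitone v := by
    intro s t hst
    have h1 : P t - P s = ∫ x in s..t, u0 x :=
      intervalIntegral.integral_interval_sub_left (hu0i.intervalIntegrable)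
        (hu0i.intervalIntegrable)
    have h2 : 0 ≤ ∫ x in s..t, u0 x :=
      intervalIntegral.integral_nonneg hst fun x _ => hu0nn x
    simp only [hvdef]
    linarith
  have hvdiff : ∀ s t : ℝ, s ≤ t → v s - v t = ∫ x in Ioc s t, u0 x := by
    intro s t hst
    have h1 : P t - P s = ∫ x in s..t, u0 x :=
      intervalIntegral.integral_interval_sub_left (hu0i.intervalIntegrable)
        (hu0i.intervalIntegrable)
    rw [intervalIntegral.integral_of_le hst] at h1
    simp only [hvdef]
    linarith
  have hvS : ∀ t : ℝ, 0 ≤ t → v t = ∫ s in Ioi t ∩ S, u s := by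
    intro t ht
    have hsplit : Ioi (0:ℝ) ∩ S = (Ioc 0 t ∩ S) ∪ (Ioi t ∩ S) := by
      rw [← union_inter_distrib_right, Ioc_union_Ioi_eq_Ioi ht]
    have hdisj : Disjoint (Ioc (0:ℝ) t ∩ S) (Ioi t ∩ S) := by
      refine disjoint_left.2 fun x hx1 hx2 => ?_
      exact absurd hx2.1 (not_lt.2 hx1.1.2)
    have hv0split : v0 = (∫ s in Ioc (0:ℝ) t ∩ S, u s) + ∫ s in Ioi t ∩ S, u s := by
      rw [hv0def, hsplit, setIntegral_union hdisj (measurableSet_Ioi.inter hS)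
        (hui.mono_set inter_subset_right) (hui.mono_set inter_subset_right)]
    have hPt : P t = ∫ s in Ioc (0:ℝ) t ∩ S, u s := by
      rw [hPdef]
      simp only
      rw [intervalIntegral.integral_of_le ht, hu0def, setIntegral_indicator hS, inter_comm]
    simp only [hvdef]
    rw [hv0split, hPt]
    ring
  have hv0nonneg : ∀ t : ℝ, 0 ≤ t → 0 ≤ v t := by
    intro t ht
    rw [hvS t ht]
    exact setIntegral_nonneg (measurableSet_Ioi.inter hS) fun s hs => hu0 s hs.2
  -- the solution
  set U : ℝ → ℝ := fun t => Ginv (v t) with hUdef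
  have hUc : Continuous U := hGinvc.comp hvc
  have hUb : ∀ t ∈ S, b ≤ U t ∧ U t ≤ U 0 := by
    intro t ht
    constructor
    · rw [← hGinv0]
      exact hGinvmono (hv0nonneg t (hSpos t ht))
    · exact hGinvmono (hvmono (hSpos t ht))
  -- the substitution identity on compact pieces
  have hkey : ∀ t r : ℝ, 0 ≤ t → t ≤ r → Ioc t r ⊆ S →
      ∫ s in Ioc t r, u s * l (U s) = Ginv (v t) - Ginv (v r) := by
    intro t r ht htr hsub
    have hφc : Continuous fun y => l (Ginv (v t - y)) :=
      hlc.comp (hGinvc.comp (continuous_const.sub continuous_id))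
    have h1 := key_subst u0 hu0i hu0nn (fun y => l (Ginv (v t - y))) hφc t r htr
    have h2 : ∫ s in Ioc t r, (fun y => l (Ginv (v t - y))) (∫ x in Ioc t s, u0 x) * u0 s
        = ∫ s in Ioc t r, u s * l (U s) := by
      refine setIntegral_congr_fun measurableSet_Ioc fun s hs => ?_
      have hts : t ≤ s := hs.1.le
      have hsS : s ∈ S := hsub hs
      have hW : v t - (∫ x in Ioc t s, u0 x) = v s := by
        have := hvdiff t s hts
        linarith
      simp only
      rw [hW, hu0def, indicator_of_mem hsS, mul_comm]
    have h3 : (∫ x in Ioc t r, u0 x) = v t - v r := (hvdiff t r htr).symm ▸ rfl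
    have h4 : 0 ≤ v t - v r := sub_nonneg.2 (hvmono htr)
    rw [h2] at h1
    rw [h1, h3]
    rw [← intervalIntegral.integral_of_le h4]
    have h5 := intervalIntegral.integral_comp_sub_left
      (a := (0:ℝ)) (b := v t - v r) (fun z => l (Ginv z)) (v t)
    rw [h5]
    simp only [sub_sub_cancel, sub_zero]
    rw [hFTCinv]
  -- integrability of u * l (U ·) on S
  obtain ⟨K, hK⟩ : ∃ K, ∀ x ∈ Icc b (U 0), ‖l x‖ ≤ K :=
    (isCompact_Icc).exists_bound_of_continuousOn hlc.continuousOn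
  have hlUK : ∀ s ∈ S, l (U s) ≤ K := by
    intro s hs
    have := hK (U s) ⟨(hUb s hs).1, (hUb s hs).2⟩
    rwa [Real.norm_eq_abs, abs_of_pos (hlp _)] at this
  have hulUi : IntegrableOn (fun s => u s * l (U s)) S := by
    have hmeas : AEStronglyMeasurable (fun s => u s * l (U s)) (volume.restrict S) :=
      hui.aestronglyMeasurable.mul (hlc.comp hUc).aestronglyMeasurable.restrict
    refine Integrable.mono' (hui.const_mul K) hmeas ?_
    refine (ae_restrict_iff' hS).2 (Filter.Eventually.of_forall fun s hs => ?_)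
    rw [Real.norm_eq_abs, abs_mul, abs_of_nonneg (hu0 s hs), abs_of_pos (hlp _), mul_comm K]
    exact mul_le_mul_of_nonneg_left (hlUK s hs) (hu0 s hs)
  -- limits along q
  have hIocsub : ∀ t ∈ S, ∀ n, Ioc t (q n) ⊆ S := by
    intro t ht n
    intro x hx
    have : x ∈ Ioi t ∩ S := by
      rw [hUnion t ht]
      exact mem_iUnion.2 ⟨n, hx⟩
    exact this.2
  have hvq0 : Tendsto (fun n => v (q n)) atTop (𝓝 0) := by
    have hanti : Antitone fun n => Ioi (q n) ∩ S := fun m n hmn =>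
      inter_subset_inter_left _ (Ioi_subset_Ioi (hqmono hmn))
    have htend := tendsto_setIntegral_of_antitone
      (f := u) (μ := volume)
      (fun n => measurableSet_Ioi.inter hS) hanti
      ⟨0, hui.mono_set inter_subset_right⟩
    rw [hInter] at htend
    simp only [Measure.restrict_empty, integral_zero_measure] at htend
    have : (fun n => v (q n)) = fun n => ∫ s in Ioi (q n) ∩ S, u s := by
      funext n
      exact hvS (q n) (hSpos _ (hqS n))
    rw [this]
    exact htend
  -- the fixed point equation
  have heq : ∀ t ∈ S, U t = b + ∫ s in Ioi t ∩ S, u s * l (U s) := by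
    intro t ht
    have hmonoIoc : Monotone fun n => Ioc t (q n) := fun m n hmn =>
      Ioc_subset_Ioc_right (hqmono hmn)
    have h1 : Tendsto (fun n => ∫ s in Ioc t (q n), u s * l (U s)) atTop
        (𝓝 (∫ s in Ioi t ∩ S, u s * l (U s))) := by
      have := tendsto_setIntegral_of_monotone (f := fun s => u s * l (U s)) (μ := volume)
        (fun n => measurableSet_Ioc) hmonoIoc
        (by rw [← hUnion t ht]; exact hulUi.mono_set inter_subset_right)
      rwa [← hUnion t ht] at this
    have h2 : Tendsto (fun n => Ginv (v t) - Ginv (v (q n))) atTop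
        (𝓝 (Ginv (v t) - Ginv 0)) :=
      tendsto_const_nhds.sub ((hGinvc.continuousAt.tendsto).comp hvq0)
    have h3 : ∀ᶠ n in atTop, (fun n => ∫ s in Ioc t (q n), u s * l (U s)) n
        = (fun n => Ginv (v t) - Ginv (v (q n))) n := by
      filter_upwards [hqle t ht] with n hn
      exact hkey t (q n) (hSpos t ht) hn (hIocsub t ht n)
    have h4 := h2.congr' (h3.mono fun n hn => hn.symm)
    have h5 := tendsto_nhds_unique h1 h4
    rw [h5, hGinv0]
    simp only [hUdef]
    ring
  -- uniqueness
  refine ⟨U, hUc, heq, hUb, ?_⟩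
  intro U' hU'c ⟨M, hM⟩ heq' t ht
  -- bound for l ∘ U' on S
  obtain ⟨K', hK'⟩ : ∃ K', ∀ x ∈ Icc (-M) M, ‖l x‖ ≤ K' :=
    (isCompact_Icc).exists_bound_of_continuousOn hlc.continuousOn
  have hU'mem : ∀ s ∈ S, U' s ∈ Icc (-M) M := fun s hs => abs_le.1 (hM s hs)
  have hlU'K : ∀ s ∈ S, l (U' s) ≤ K' := by
    intro s hs
    have := hK' (U' s) (hU'mem s hs)
    rwa [Real.norm_eq_abs, abs_of_pos (hlp _)] at this
  have hU'meas : AEStronglyMeasurable U' (volume.restrict S) :=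
    hU'c.aestronglyMeasurable hS
  have hfi : IntegrableOn (fun s => u s * l (U' s)) S := by
    have hmeas : AEStronglyMeasurable (fun s => u s * l (U' s)) (volume.restrict S) :=
      hui.aestronglyMeasurable.mul (hlc.comp_aestronglyMeasurable hU'meas)
    refine Integrable.mono' (hui.const_mul K') hmeas ?_
    refine (ae_restrict_iff' hS).2 (Filter.Eventually.of_forall fun s hs => ?_)
    rw [Real.norm_eq_abs, abs_mul, abs_of_nonneg (hu0 s hs), abs_of_pos (hlp _), mul_comm K']
    exact mul_le_mul_of_nonneg_left (hlU'K s hs) (hu0 s hs)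
  set h1f : ℝ → ℝ := S.indicator (fun s => u s * l (U' s)) with hh1def
  have hh1i : Integrable h1f := (integrable_indicator_iff hS).2 hfi
  have hh1nn : ∀ s, 0 ≤ h1f s := by
    intro s
    by_cases h : s ∈ S
    · rw [hh1def, indicator_of_mem h]
      exact mul_nonneg (hu0 s h) (hlp _).le
    · rw [hh1def, indicator_of_notMem h]
  -- increments of U'
  have hU'diff : ∀ p ∈ S, ∀ s ∈ S, p ≤ s →
      U' p - U' s = ∫ x in Ioc p s, h1f x := by
    intro p hp s hs hps
    have hsplit : Ioi p ∩ S = (Ioc p s ∩ S) ∪ (Ioi s ∩ S) := by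
      rw [← union_inter_distrib_right, Ioc_union_Ioi_eq_Ioi hps]
    have hdisj : Disjoint (Ioc p s ∩ S) (Ioi s ∩ S) := by
      refine disjoint_left.2 fun x hx1 hx2 => ?_
      exact absurd hx2.1 (not_lt.2 hx1.1.2)
    have h1 : ∫ x in Ioi p ∩ S, u x * l (U' x)
        = (∫ x in Ioc p s ∩ S, u x * l (U' x)) + ∫ x in Ioi s ∩ S, u x * l (U' x) := by
      rw [hsplit, setIntegral_union hdisj (measurableSet_Ioi.inter hS)
        (hfi.mono_set inter_subset_right) (hfi.mono_set inter_subset_right)]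
    have h2 : ∫ x in Ioc p s, h1f x = ∫ x in Ioc p s ∩ S, u x * l (U' x) := by
      rw [hh1def, setIntegral_indicator hS, inter_comm]
    rw [heq' p hp, heq' s hs, h2]
    linarith
  -- the substitution identity for U'
  have hkey2 : ∀ p ∈ S, ∀ r ∈ S, p ≤ r → Ioc p r ⊆ S →
      G (U' p) - G (U' r) = ∫ x in Ioc p r, u x := by
    intro p hp r hr hpr hsub
    have hφc : Continuous fun y => 1 / l (U' p - y) :=
      continuous_const.div (hlc.comp (continuous_const.sub continuous_id))
        fun y => (hlp _).ne'
    have h1 := key_subst h1f hh1i hh1nn (fun y => 1 / l (U' p - y)) hφc p r hpr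
    have h2 : ∫ s in Ioc p r, (fun y => 1 / l (U' p - y)) (∫ x in Ioc p s, h1f x) * h1f s
        = ∫ s in Ioc p r, u s := by
      refine setIntegral_congr_fun measurableSet_Ioc fun s hs => ?_
      have hsS : s ∈ S := hsub hs
      have hW : U' p - (∫ x in Ioc p s, h1f x) = U' s := by
        have := hU'diff p hp s hsS hs.1.le
        linarith
      simp only
      rw [hW, hh1def, indicator_of_mem hsS]
      field_simp
      exact mul_div_cancel_left₀ (u s) (hlp (U' s)).ne'
    have h3 : (∫ x in Ioc p r, h1f x) = U' p - U' r := (hU'diff p hp r hr hpr).symm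
    have h4 : 0 ≤ U' p - U' r := by
      rw [← h3]
      exact setIntegral_nonneg measurableSet_Ioc fun x _ => hh1nn x
    rw [h2] at h1
    rw [h1, h3, ← intervalIntegral.integral_of_le h4]
    have h5 := intervalIntegral.integral_comp_sub_left
      (a := (0:ℝ)) (b := U' p - U' r) (fun z => 1 / l z) (U' p)
    rw [h5]
    simp only [sub_sub_cancel, sub_zero]
    rw [← hGsub]
  -- limits
  have hU'q : Tendsto (fun n => U' (q n)) atTop (𝓝 b) := by
    have hanti : Antitone fun n => Ioi (q n) ∩ S := fun m n hmn =>
      inter_subset_inter_left _ (Ioi_subset_Ioi (hqmono hmn))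
    have htend := tendsto_setIntegral_of_antitone
      (f := fun s => u s * l (U' s)) (μ := volume)
      (fun n => measurableSet_Ioi.inter hS) hanti
      ⟨0, hfi.mono_set inter_subset_right⟩
    rw [hInter] at htend
    simp only [Measure.restrict_empty, integral_zero_measure] at htend
    have : (fun n => U' (q n)) = fun n => b + ∫ s in Ioi (q n) ∩ S, u s * l (U' s) := by
      funext n
      exact heq' (q n) (hqS n)
    rw [this]
    have := tendsto_const_nhds.add htend (f := fun _ : ℕ => b) (x := atTop)
    simpa using this
  have hvq : Tendsto (fun n => ∫ x in Ioc t (q n), u x) atTop (𝓝 (v t)) := by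
    have hmonoIoc : Monotone fun n => Ioc t (q n) := fun m n hmn =>
      Ioc_subset_Ioc_right (hqmono hmn)
    have := tendsto_setIntegral_of_monotone (f := u) (μ := volume)
      (fun n => measurableSet_Ioc) hmonoIoc
      (by rw [← hUnion t ht]; exact hui.mono_set inter_subset_right)
    rw [← hUnion t ht] at this
    rwa [← hvS t (hSpos t ht)] at this
  have h6 : Tendsto (fun n => G (U' t) - G (U' (q n))) atTop (𝓝 (G (U' t) - G b)) :=
    tendsto_const_nhds.sub ((hGcont.continuousAt.tendsto).comp hU'q)
  have h7 : ∀ᶠ n in atTop, G (U' t) - G (U' (q n)) = ∫ x in Ioc t (q n), u x := by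
    filter_upwards [hqle t ht] with n hn
    exact hkey2 t ht (q n) (hqS n) hn (hIocsub t ht n)
  have h8 := hvq.congr' (h7.mono fun n hn => hn.symm)
  have h9 := tendsto_nhds_unique h8 h6
  -- conclude
  have hGU't : G (U' t) = v t := by
    rw [hGb, sub_zero] at h9
    linarith [h9]
  have hGUt : G (U t) = v t := hGinv (v t)
  exact hGmono.injective (by rw [hGU't, hGUt])


lemma timeSet_struct (T : EReal) (hT : 0 < T) :
    MeasurableSet (timeSet T) ∧ (0:ℝ) ∈ timeSet T ∧ (∀ t ∈ timeSet T, (0:ℝ) ≤ t) ∧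
    ∃ q : ℕ → ℝ, Monotone q ∧ (∀ n, q n ∈ timeSet T) ∧
      (∀ t ∈ timeSet T, ∀ᶠ n in atTop, t ≤ q n) ∧
      (∀ t ∈ timeSet T, Ioi t ∩ timeSet T = ⋃ n, Ioc t (q n)) ∧
      (⋂ n, (Ioi (q n) ∩ timeSet T) = (∅ : Set ℝ)) := by
  have h0 : (0:ℝ) ∈ timeSet T := ⟨le_rfl, hT.le⟩
  have hpos : ∀ t ∈ timeSet T, (0:ℝ) ≤ t := fun t ht => ht.1
  induction T using EReal.rec with
  | bot => exact absurd hT (by simp)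
  | coe c =>
    have hc : (0:ℝ) < c := EReal.coe_lt_coe_iff.1 hT
    have hset : timeSet (c : EReal) = Icc 0 c := by
      ext s
      simp only [timeSet, mem_setOf_eq, mem_Icc, EReal.coe_le_coe_iff]
    refine ⟨by rw [hset]; exact measurableSet_Icc, h0, hpos, fun _ => c, monotone_const,
      fun n => ⟨hc.le, le_rfl⟩, fun t ht => Filter.Eventually.of_forall fun n => ?_, ?_, ?_⟩
    · rw [hset] at ht; exact ht.2
    · intro t ht
      rw [hset] at ht ⊢
      ext x
      simp only [mem_inter_iff, mem_Ioi, mem_Icc, mem_iUnion, mem_Ioc]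
      constructor
      · rintro ⟨h1, h2, h3⟩; exact ⟨0, h1, h3⟩
      · rintro ⟨n, h1, h2⟩; exact ⟨h1, le_trans ht.1 h1.le, h2⟩
    · rw [hset]
      refine eq_empty_iff_forall_notMem.2 fun x hx => ?_
      have := mem_iInter.1 hx 0
      exact absurd this.2.2 (not_le.2 this.1)
  | top =>
    have hset : timeSet (⊤ : EReal) = Ici 0 := by
      ext s
      simp only [timeSet, mem_setOf_eq, mem_Ici, le_top, and_true]
    refine ⟨by rw [hset]; exact measurableSet_Ici, h0, hpos, fun n => (n:ℝ), ?_,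
      fun n => ⟨Nat.cast_nonneg n, le_top⟩, fun t ht => ?_, fun t ht => ?_, ?_⟩
    · exact fun m n hmn => Nat.cast_le.2 hmn
    · obtain ⟨n, hn⟩ := exists_nat_ge t
      exact eventually_atTop.2 ⟨n, fun m hm => le_trans hn (Nat.cast_le.2 hm)⟩
    · rw [hset] at ht ⊢
      ext x
      simp only [mem_inter_iff, mem_Ioi, mem_Ici, mem_iUnion, mem_Ioc]
      constructor
      · rintro ⟨h1, _⟩
        obtain ⟨n, hn⟩ := exists_nat_ge x
        exact ⟨n, h1, hn⟩
      · rintro ⟨n, h1, _⟩; exact ⟨h1, le_trans ht (le_of_lt h1)⟩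
    · rw [hset]
      refine eq_empty_iff_forall_notMem.2 fun x hx => ?_
      obtain ⟨n, hn⟩ := exists_nat_ge x
      have := mem_iInter.1 hx n
      exact absurd this.1 (not_lt.2 hn)


/-- **Lemma 3.1, sufficiency direction.** If `u ∈ L¹([0,T];ℝ₊)` and `l : ℝ → (0,∞)` is a
continuous function of class `LS` (i.e. `∫_{-∞}^0 dx/l(x) = ∫_0^{+∞} dx/l(x) = +∞`), then for
all `a ≤ 0 ≤ b` the backward equations `L_t = a - ∫_t^T u(s) l(L_s) ds` and
`U_t = b + ∫_t^T u(s) l(U_s) ds` each have a unique bounded continuous solution on `[0,T]`,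
and these satisfy `L_0 ≤ L_t ≤ a ≤ 0 ≤ b ≤ U_t ≤ U_0` for all `t ∈ [0,T]`. -/
theorem lemma_3_1_sufficiency
    (T : EReal) (hT : 0 < T)
    (u : ℝ → ℝ)
    (hu_nonneg : ∀ s ∈ timeSet T, 0 ≤ u s)
    (hu_int : IntegrableOn u (timeSet T))
    (l : ℝ → ℝ) (hl_cont : Continuous l) (hl_pos : ∀ x, 0 < l x)
    (hl_LS_neg : ∫⁻ x in Iic (0 : ℝ), ENNReal.ofReal (1 / l x) = ⊤)
    (hl_LS_pos : ∫⁻ x in Ici (0 : ℝ), ENNReal.ofReal (1 / l x) = ⊤)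
    (a b : ℝ) (ha : a ≤ 0) (hb : 0 ≤ b) :
    ∃ L U : ℝ → ℝ,
      ContinuousOn L (timeSet T) ∧ (∃ M, ∀ t ∈ timeSet T, |L t| ≤ M) ∧
      (∀ t ∈ timeSet T, L t = a - ∫ s in Ioi t ∩ timeSet T, u s * l (L s)) ∧
      ContinuousOn U (timeSet T) ∧ (∃ M, ∀ t ∈ timeSet T, |U t| ≤ M) ∧
      (∀ t ∈ timeSet T, U t = b + ∫ s in Ioi t ∩ timeSet T, u s * l (U s)) ∧
      (∀ L' : ℝ → ℝ, ContinuousOn L' (timeSet T) → (∃ M, ∀ t ∈ timeSet T, |L' t| ≤ M) →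
        (∀ t ∈ timeSet T, L' t = a - ∫ s in Ioi t ∩ timeSet T, u s * l (L' s)) →
        ∀ t ∈ timeSet T, L' t = L t) ∧
      (∀ U' : ℝ → ℝ, ContinuousOn U' (timeSet T) → (∃ M, ∀ t ∈ timeSet T, |U' t| ≤ M) →
        (∀ t ∈ timeSet T, U' t = b + ∫ s in Ioi t ∩ timeSet T, u s * l (U' s)) →
        ∀ t ∈ timeSet T, U' t = U t) ∧
      (∀ t ∈ timeSet T, L 0 ≤ L t ∧ L t ≤ a ∧ b ≤ U t ∧ U t ≤ U 0) := by
  obtain ⟨hS, h0S, hSpos, q, hqmono, hqS, hqle, hUnion, hInter⟩ := timeSet_struct T hT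
  obtain ⟨U, hUc, hUeq, hUb, hUuniq⟩ := master (timeSet T) hS h0S hSpos q hqmono hqS hqle
    hUnion hInter u hu_nonneg hu_int l hl_cont hl_pos hl_LS_neg hl_LS_pos b
  -- reflected problem for L
  set lt : ℝ → ℝ := fun x => l (-x) with hltdef
  have hltc : Continuous lt := hl_cont.comp continuous_neg
  have hltp : ∀ x, 0 < lt x := fun x => hl_pos (-x)
  have hmeas1 : Measurable fun y : ℝ => ENNReal.ofReal (1 / l y) :=
    ENNReal.measurable_ofReal.comp
      (continuous_const.div hl_cont fun x => (hl_pos x).ne').measurable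
  have hltneg : ∫⁻ x in Iic (0:ℝ), ENNReal.ofReal (1 / lt x) = ⊤ := by
    have := lintegral_reflect (fun y => ENNReal.ofReal (1 / l y)) hmeas1
    rw [this]
    exact hl_LS_pos
  have hltpos : ∫⁻ x in Ici (0:ℝ), ENNReal.ofReal (1 / lt x) = ⊤ := by
    have := lintegral_reflect' (fun y => ENNReal.ofReal (1 / l y)) hmeas1
    rw [this]
    exact hl_LS_neg
  obtain ⟨V, hVc, hVeq, hVb, hVuniq⟩ := master (timeSet T) hS h0S hSpos q hqmono hqS hqle
    hUnion hInter u hu_nonneg hu_int lt hltc hltp hltneg hltpos (-a)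
  set L : ℝ → ℝ := fun t => -(V t) with hLdef
  have hintL : ∀ W : ℝ → ℝ, (fun s => u s * lt (-(W s))) = fun s => u s * l (W s) := by
    intro W; funext s; rw [hltdef]; simp
  refine ⟨L, U, (hVc.neg).continuousOn, ?_, ?_, hUc.continuousOn, ?_, hUeq, ?_, hUuniq, ?_⟩
  · refine ⟨max |a| |V 0|, fun t ht => ?_⟩
    obtain ⟨h1, h2⟩ := hVb t ht
    rw [hLdef]
    simp only [abs_neg]
    rw [abs_le]
    constructor
    · have := le_abs_self a
      have := le_max_left |a| |V 0|
      linarith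
    · have := le_abs_self (V 0)
      have := le_max_right |a| |V 0|
      linarith
  · intro t ht
    have h1 := hVeq t ht
    have h2 : (fun s => u s * lt (V s)) = fun s => u s * l (L s) := by
      funext s; rw [hLdef, hltdef]
    rw [h2] at h1
    rw [hLdef]
    simp only
    linarith [h1]
  · refine ⟨max |b| |U 0|, fun t ht => ?_⟩
    obtain ⟨h1, h2⟩ := hUb t ht
    rw [abs_le]
    constructor
    · have := le_abs_self b
      have h3 := neg_abs_le b
      have := le_max_left |b| |U 0|
      linarith
    · have := le_abs_self (U 0)
      have := le_max_right |b| |U 0|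
      linarith
  · -- uniqueness for L
    intro L' hL'c hL'bdd hL'eq t ht
    obtain ⟨M, hM⟩ := hL'bdd
    set W' : ℝ → ℝ := fun t => -(L' t) with hW'def
    have hW'c : ContinuousOn W' (timeSet T) := hL'c.neg
    have hW'bdd : ∃ M, ∀ t ∈ timeSet T, |W' t| ≤ M :=
      ⟨M, fun t ht => by rw [hW'def]; simpa using hM t ht⟩
    have hW'eq : ∀ t ∈ timeSet T, W' t = -a + ∫ s in Ioi t ∩ timeSet T, u s * lt (W' s) := by
      intro r hr
      have h1 := hL'eq r hr
      have h2 : (fun s => u s * lt (W' s)) = fun s => u s * l (L' s) := by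
        funext s; rw [hW'def, hltdef]; simp
      rw [h2, hW'def]
      simp only
      linarith [h1]
    have := hVuniq W' hW'c hW'bdd hW'eq t ht
    have hLt : L' t = -(W' t) := by rw [hW'def]; simp
    rw [hLt, this, hLdef]
  · intro t ht
    obtain ⟨h1, h2⟩ := hVb t ht
    obtain ⟨h3, h4⟩ := hUb t ht
    refine ⟨?_, ?_, h3, h4⟩
    · rw [hLdef]; simp only [neg_le_neg_iff]; exact h2
    · rw [hLdef]; simp only; linarith
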